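/- Let f : ℕ → ℂ be multiplicative and let k ≥ 2 be an integer. Let f^{k∘} denote the k-fold binomial convolution of f with itself, i.e., f^{k∘}(n) = ξ(n) · ((f/ξ) * ⋯ * (f/ξ))(n) (k-fold Dirichlet power of f/ξ). If f^{k∘}(n) = k^{Ω(n)} · f(n) for all positive integers n, then f is completely multiplicative. -/

import Mathlib

/-- `ξ(n) = ∏_p ν_p(n)!`. -/
def xi (n : ℕ) : ℕ := ∏ p ∈ n.primeFactors, Nat.factorial (n.factorization p)

/-- `Ω(n) = ∑_p ν_p(n)`. -/
def bigOmega (n : ℕ) : ℕ := ∑ p ∈ n.primeFactors, n.factorization p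

/-- The Dirichlet convolution. -/
noncomputable def dconv (f g : ℕ → ℂ) (n : ℕ) : ℂ :=
  ∑ d ∈ n.divisors, f d * g (n / d)

/-- `δ(1) = 1`, `δ(n) = 0` for `n > 1`. -/
def delta (n : ℕ) : ℂ := if n = 1 then 1 else 0

/-- `k`-fold Dirichlet power of `f` (`0`-th power is the identity `δ`). -/
noncomputable def dpow (f : ℕ → ℂ) : ℕ → ℕ → ℂ
  | 0 => delta
  | k + 1 => dconv f (dpow f k)

/-- Multiplicative arithmetical function. -/
def IsMult (f : ℕ → ℂ) : Prop :=
  f 1 = 1 ∧ ∀ m n : ℕ, 0 < m → 0 < n → Nat.Coprime m n → f (m * n) = f m * f n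

/-- Completely multiplicative arithmetical function. -/
def IsCompletelyMult (f : ℕ → ℂ) : Prop :=
  f 1 = 1 ∧ ∀ m n : ℕ, 0 < m → 0 < n → f (m * n) = f m * f n

lemma xi_one : xi 1 = 1 := by simp [xi]

lemma xi_prime_pow {p : ℕ} (hp : p.Prime) (a : ℕ) : xi (p ^ a) = a.factorial := by
  rcases Nat.eq_zero_or_pos a with rfl | ha
  · simp [xi]
  · unfold xi
    rw [Nat.primeFactors_prime_pow ha.ne' hp]
    simp [hp.factorization_pow]

lemma bigOmega_prime_pow {p : ℕ} (hp : p.Prime) (a : ℕ) : bigOmega (p ^ a) = a := by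
  rcases Nat.eq_zero_or_pos a with rfl | ha
  · simp [bigOmega]
  · unfold bigOmega
    rw [Nat.primeFactors_prime_pow ha.ne' hp]
    simp [hp.factorization_pow]

lemma dconv_prime_pow (f g : ℕ → ℂ) {p : ℕ} (hp : p.Prime) (a : ℕ) :
    dconv f g (p ^ a) = ∑ j ∈ Finset.range (a + 1), f (p ^ j) * g (p ^ (a - j)) := by
  unfold dconv
  rw [Nat.divisors_prime_pow hp, Finset.sum_map]
  refine Finset.sum_congr rfl fun j hj => ?_
  have hja : j ≤ a := Nat.lt_succ_iff.mp (Finset.mem_range.mp hj)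
  simp only [Function.Embedding.coeFn_mk]
  rw [Nat.pow_div hja hp.pos]

lemma dpow_one_eval (g : ℕ → ℂ) (hg1 : g 1 = 1) (K : ℕ) : dpow g K 1 = 1 := by
  induction K with
  | zero => simp [dpow, delta]
  | succ K ih => simp [dpow, dconv, hg1, ih]

-- Sublemma A
lemma dpow_prime_pow_of_exp (g : ℕ → ℂ) {p : ℕ} (hp : p.Prime) (c : ℂ) (m : ℕ)
    (hg : ∀ j ≤ m, g (p ^ j) = c ^ j / (j.factorial : ℂ)) (K : ℕ) :
    ∀ m' ≤ m, dpow g K (p ^ m') = (K : ℂ) ^ m' * c ^ m' / (m'.factorial : ℂ) := by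
  induction K with
  | zero =>
    intro m' _
    rcases Nat.eq_zero_or_pos m' with rfl | hm'
    · simp [dpow, delta]
    · have : p ^ m' ≠ 1 := by
        have := Nat.one_lt_pow hm'.ne' hp.one_lt
        omega
      simp [dpow, delta, this, zero_pow hm'.ne', hp.ne_one, hm'.ne']
  | succ K ih =>
    intro m' hm'
    show dconv g (dpow g K) (p ^ m') = _
    rw [dconv_prime_pow _ _ hp]
    have hterm : ∀ j ∈ Finset.range (m' + 1),
        g (p ^ j) * dpow g K (p ^ (m' - j))
          = (c ^ j / (j.factorial : ℂ)) *
            ((K : ℂ) ^ (m' - j) * c ^ (m' - j) / ((m' - j).factorial : ℂ)) := by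
      intro j hj
      have hjm : j ≤ m' := Nat.lt_succ_iff.mp (Finset.mem_range.mp hj)
      rw [hg j (by omega), ih (m' - j) (by omega)]
    rw [Finset.sum_congr rfl hterm]
    have hexp : ((K : ℂ) + 1) ^ m' = ∑ j ∈ Finset.range (m' + 1),
        (1 : ℂ) ^ j * (K : ℂ) ^ (m' - j) * ((m'.choose j : ℕ) : ℂ) := by
      rw [← add_pow]; ring_nf
    push_cast
    rw [hexp, Finset.sum_mul, Finset.sum_div]
    refine Finset.sum_congr rfl fun j hj => ?_
    have hjm : j ≤ m' := Nat.lt_succ_iff.mp (Finset.mem_range.mp hj)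
    rw [Nat.cast_choose ℂ hjm]
    have h1 : (j.factorial : ℂ) ≠ 0 := Nat.cast_ne_zero.mpr (Nat.factorial_ne_zero j)
    have h2 : ((m' - j).factorial : ℂ) ≠ 0 := Nat.cast_ne_zero.mpr (Nat.factorial_ne_zero _)
    have h3 : (m'.factorial : ℂ) ≠ 0 := Nat.cast_ne_zero.mpr (Nat.factorial_ne_zero _)
    have hc : c ^ (m' - j) * c ^ j = c ^ m' := by
      rw [← pow_add]; congr 1; omega
    field_simp
    linear_combination ((K:ℂ) ^ (m'-j)) * hc

-- Sublemma B
lemma dpow_prime_pow_top (g : ℕ → ℂ) {p : ℕ} (hp : p.Prime) (c : ℂ) (a : ℕ) (ha : 2 ≤ a)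
    (hglt : ∀ j < a, g (p ^ j) = c ^ j / (j.factorial : ℂ)) :
    ∀ K : ℕ, 1 ≤ K → dpow g K (p ^ a) =
      (K : ℂ) * g (p ^ a) + ((K : ℂ) ^ a - (K : ℂ)) * c ^ a / (a.factorial : ℂ) := by
  obtain ⟨b, rfl⟩ : ∃ b, a = b + 2 := ⟨a - 2, by omega⟩
  set a := b + 2 with hab
  have hg1 : g 1 = 1 := by
    have := hglt 0 (by omega); simpa using this
  have hgle : ∀ j ≤ a - 1, g (p ^ j) = c ^ j / (j.factorial : ℂ) :=
    fun j hj => hglt j (by omega)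
  intro K hK
  induction K with
  | zero => omega
  | succ K ih =>
    rcases Nat.eq_zero_or_pos K with rfl | hK1
    · -- K + 1 = 1
      show dconv g (dpow g 0) (p ^ a) = _
      rw [dconv_prime_pow _ _ hp]
      rw [Finset.sum_range_succ]
      have hz : ∑ j ∈ Finset.range a, g (p ^ j) * dpow g 0 (p ^ (a - j)) = 0 := by
        refine Finset.sum_eq_zero fun j hj => ?_
        have hja : j < a := Finset.mem_range.mp hj
        have : p ^ (a - j) ≠ 1 := by
          have := Nat.one_lt_pow (by omega : a - j ≠ 0) hp.one_lt
          omega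
        simp [dpow, delta, this, hp.ne_one]
        intro h; exfalso; omega
      rw [hz]
      simp [dpow, delta]
    · have ihK := ih hK1
      show dconv g (dpow g K) (p ^ a) = _
      rw [dconv_prime_pow _ _ hp]
      rw [Finset.sum_range_succ', Finset.sum_range_succ]
      -- now: ∑ j ∈ range (b+1), T (j+1)  +  T (b+2)  +  T 0  (indices as j+1)
      have hT0 : g (p ^ 0) * dpow g K (p ^ (a - 0)) = dpow g K (p ^ a) := by
        simp [hg1]
      have hTa : g (p ^ (b + 1 + 1)) * dpow g K (p ^ (a - (b + 1 + 1))) = g (p ^ a) := by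
        have : a - (b + 1 + 1) = 0 := by omega
        rw [this, pow_zero, dpow_one_eval g hg1, mul_one]
      have hmid : ∀ j ∈ Finset.range (b + 1),
          g (p ^ (j + 1)) * dpow g K (p ^ (a - (j + 1)))
            = (K : ℂ) ^ (b + 1 - j) * ((a.choose (j + 1) : ℕ) : ℂ) * c ^ a
                / (a.factorial : ℂ) := by
        intro j hj
        have hjb : j < b + 1 := Finset.mem_range.mp hj
        have h1 : a - (j + 1) = b + 1 - j := by omega
        rw [hglt (j + 1) (by omega), h1,
          dpow_prime_pow_of_exp g hp c (a - 1) hgle K (b + 1 - j) (by omega)]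
        rw [Nat.cast_choose ℂ (by omega : j + 1 ≤ a)]
        have e1 : ((j+1).factorial : ℂ) ≠ 0 := Nat.cast_ne_zero.mpr (Nat.factorial_ne_zero _)
        have e2 : ((a - (j+1)).factorial : ℂ) ≠ 0 := Nat.cast_ne_zero.mpr (Nat.factorial_ne_zero _)
        have e3 : ((a).factorial : ℂ) ≠ 0 := Nat.cast_ne_zero.mpr (Nat.factorial_ne_zero _)
        have e4 : ((b + 1 - j).factorial : ℂ) ≠ 0 := Nat.cast_ne_zero.mpr (Nat.factorial_ne_zero _)
        have hc : c ^ (b + 1 - j) * c ^ (j + 1) = c ^ a := by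
          rw [← pow_add]; congr 1; omega
        rw [h1]
        field_simp
        linear_combination ((K:ℂ) ^ (b + 1 - j)) * hc
      rw [Finset.sum_congr rfl hmid, hT0, hTa, ihK]
      -- binomial identity
      have hS : ((K : ℂ) + 1) ^ a
          = (K : ℂ) ^ a + 1 + ∑ j ∈ Finset.range (b + 1),
              (K : ℂ) ^ (b + 1 - j) * ((a.choose (j + 1) : ℕ) : ℂ) := by
        have := add_pow (1 : ℂ) (K : ℂ) a
        rw [Finset.sum_range_succ', Finset.sum_range_succ] at this
        simp only [one_pow, one_mul, pow_zero, Nat.sub_zero, Nat.choose_zero_right,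
          Nat.cast_one, mul_one] at this
        rw [add_comm (1:ℂ) (K:ℂ)] at this
        rw [this]
        have hch : a.choose (b + 1 + 1) = 1 := by
          rw [show b + 1 + 1 = a from rfl, Nat.choose_self]
        rw [hch]
        have : ∀ j ∈ Finset.range (b + 1),
            (K : ℂ) ^ (a - (j + 1)) * ((a.choose (j + 1) : ℕ) : ℂ)
            = (K : ℂ) ^ (b + 1 - j) * ((a.choose (j + 1) : ℕ) : ℂ) := by
          intro j hj
          have : a - (j + 1) = b + 1 - j := by omega
          rw [this]
        rw [Finset.sum_congr rfl this]
        have h0 : a - (b + 1 + 1) = 0 := by omega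
        rw [h0]
        push_cast
        ring
      push_cast
      have e3 : ((a).factorial : ℂ) ≠ 0 := Nat.cast_ne_zero.mpr (Nat.factorial_ne_zero _)
      rw [← Finset.sum_div, ← Finset.sum_mul]
      linear_combination (-(c ^ a) / (a.factorial : ℂ)) * hS


/-- If `f` is multiplicative, `k ≥ 2`, and the `k`-fold binomial power of `f`
(`f^{k∘} = ξ·((f/ξ) * ⋯ * (f/ξ))`, the `k`-fold Dirichlet power of `f/ξ` times `ξ`)
satisfies `f^{k∘}(n) = k^{Ω(n)} f(n)` for all `n ≥ 1`, then `f` is completely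
multiplicative. -/
theorem completely_multiplicative_of_binomial_power (f : ℕ → ℂ) (hf : IsMult f)
    (k : ℕ) (hk : 2 ≤ k)
    (hpow : ∀ n : ℕ, 0 < n →
      (xi n : ℂ) * dpow (fun m => f m / (xi m : ℂ)) k n = (k : ℂ) ^ bigOmega n * f n) :
    IsCompletelyMult f := by
  set g : ℕ → ℂ := fun m => f m / (xi m : ℂ) with hgdef
  -- Step 1: f (p^a) = (f p)^a for prime p
  have key : ∀ p : ℕ, p.Prime → ∀ a : ℕ, f (p ^ a) = (f p) ^ a := by
    intro p hp a
    induction a using Nat.strong_induction_on with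
    | _ a ih =>
      match a, ih with
      | 0, _ => simpa using hf.1
      | 1, _ => simp
      | (b+2), ih =>
        set a := b + 2 with hab
        have ha2 : 2 ≤ a := by omega
        have hglt : ∀ j < a, g (p ^ j) = (f p) ^ j / (j.factorial : ℂ) := by
          intro j hj
          simp only [hgdef]
          rw [ih j hj, xi_prime_pow hp]
        have hB := dpow_prime_pow_top g hp (f p) a ha2 hglt k (by omega)
        have hP := hpow (p ^ a) (pow_pos hp.pos a)
        rw [bigOmega_prime_pow hp, xi_prime_pow hp, hB] at hP
        have hga : g (p ^ a) = f (p ^ a) / (a.factorial : ℂ) := by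
          simp only [hgdef]; rw [xi_prime_pow hp]
        rw [hga] at hP
        have e3 : ((a).factorial : ℂ) ≠ 0 := Nat.cast_ne_zero.mpr (Nat.factorial_ne_zero _)
        have hne : ((k : ℂ) ^ a - (k : ℂ)) ≠ 0 := by
          have h1 : (k : ℕ) < k ^ a := by
            calc k < k * k := by nlinarith
            _ = k ^ 2 := by ring
            _ ≤ k ^ a := Nat.pow_le_pow_right (by omega) ha2
          have : ((k : ℂ) ^ a) ≠ (k : ℂ) := by
            intro h
            have : (k : ℕ) ^ a = k := by exact_mod_cast h
            omega
          exact sub_ne_zero_of_ne this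
        -- from hP: a! * (k * (f(p^a)/a!) + (k^a - k) * c^a / a!) = k^a * f(p^a)
        have hPP : (k : ℂ) * f (p ^ a) + ((k : ℂ) ^ a - k) * (f p) ^ a
            = (k : ℂ) ^ a * f (p ^ a) := by
          field_simp at hP
          linear_combination hP
        have : ((k : ℂ) ^ a - k) * (f (p ^ a) - (f p) ^ a) = 0 := by linear_combination -hPP
        rcases mul_eq_zero.mp this with h | h
        · exact absurd h hne
        · have := sub_eq_zero.mp h; exact this
  -- Step 2: assemble
  refine ⟨hf.1, fun m n hm hn => ?_⟩
  have hmain : ∀ N : ℕ, N ≠ 0 → f N = N.factorization.prod fun p e => (f p) ^ e := by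
    intro N hN
    have h1 := Nat.multiplicative_factorization f
      (fun x y hxy => ?_) hf.1 hN
    · rw [h1]
      refine Finsupp.prod_congr fun p hp => ?_
      have hpp : p.Prime := Nat.prime_of_mem_primeFactors (by
        rwa [Nat.support_factorization] at hp)
      exact key p hpp _
    · rcases Nat.eq_zero_or_pos x with rfl | hx
      · simp [Nat.coprime_zero_left] at hxy; simp [hxy, hf.1]
      rcases Nat.eq_zero_or_pos y with rfl | hy
      · simp [Nat.coprime_zero_right] at hxy; simp [hxy, hf.1]
      exact hf.2 x y hx hy hxy
  rw [hmain m hm.ne', hmain n hn.ne', hmain (m * n) (by positivity),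
    Nat.factorization_mul hm.ne' hn.ne']
  rw [Finsupp.prod_add_index (fun p _ => pow_zero (f p)) (fun p _ e1 e2 => pow_add (f p) e1 e2)]
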